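/- The following are equivalent for a monoid S: (1) every finitely generated S-act embeds into a monogenic S-act; (2) every 2-generated S-act embeds into a monogenic S-act; (3) the free S-act on a 2-element set embeds into a monogenic S-act; (4) the free S-act on a 2-element set embeds into S (as a right S-act); (5) there exist left cancellable elements s, t ∈ S with sS ∩ tS = ∅. -/

import Mathlib

universe u v w

/-- A right `S`-act: a set with an action `A × S → A` with `a·1 = a`, `a·(st) = (a·s)·t`. -/
class RAct (S : Type u) [Monoid S] (A : Type v) where
  act : A → S → A
  act_one : ∀ a : A, act a 1 = a
  act_mul : ∀ (a : A) (s t : S), act a (s * t) = act (act a s) t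

infixl:70 " ⊳ " => RAct.act

/-- An `S`-morphism of right `S`-acts. -/
def IsRActHom (S : Type u) [Monoid S] {A : Type v} {B : Type w}
    [RAct S A] [RAct S B] (f : A → B) : Prop :=
  ∀ (a : A) (s : S), f (a ⊳ s) = f a ⊳ s

/-- The free `S`-act `F_S(X) = X × S`, with `(x,s)·t = (x, st)`. -/
instance freeAct (S : Type u) [Monoid S] (X : Type w) : RAct S (X × S) where
  act p s := (p.1, p.2 * s)
  act_one p := by simp
  act_mul p s t := by simp [mul_assoc]

/-- Disjoint union of two `S`-acts. -/
instance sumAct (S : Type u) [Monoid S] {A : Type v} {B : Type w} [RAct S A] [RAct S B] :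
    RAct S (A ⊕ B) where
  act x s := Sum.elim (fun a => Sum.inl (a ⊳ s)) (fun b => Sum.inr (b ⊳ s)) x
  act_one := by rintro (a | b) <;> simp [RAct.act_one]
  act_mul := by rintro (a | b) s t <;> simp [RAct.act_mul]

/-- Congruence on a right `S`-act. -/
structure IsActCongr (S : Type u) [Monoid S] {A : Type v} [RAct S A]
    (r : A → A → Prop) : Prop where
  refl : ∀ a, r a a
  symm : ∀ {a b}, r a b → r b a
  trans : ∀ {a b c}, r a b → r b c → r a c
  act : ∀ {a b} (s : S), r a b → r (a ⊳ s) (b ⊳ s)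

/-- The act congruence generated by a set of pairs `H`. -/
def congGen (S : Type u) [Monoid S] {A : Type v} [RAct S A]
    (H : Set (A × A)) (a b : A) : Prop :=
  ∀ r : A → A → Prop, IsActCongr S r → (∀ p ∈ H, r p.1 p.2) → r a b

theorem isActCongr_congGen (S : Type u) [Monoid S] {A : Type v} [RAct S A]
    (H : Set (A × A)) : IsActCongr S (congGen S H) where
  refl a := fun _r hr _ => hr.refl a
  symm h := fun r hr hH => hr.symm (h r hr hH)
  trans h1 h2 := fun r hr hH => hr.trans (h1 r hr hH) (h2 r hr hH)
  act s h := fun r hr hH => hr.act s (h r hr hH)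

/-- Equations over an `S`-act `A` with variables from `X`:
`xs = yt` (which includes `xs = xt`) or `xs = a`. -/
inductive Eqn (S : Type u) (A : Type v) (X : Type w) where
  | vv : X → S → X → S → Eqn S A X
  | vc : X → S → A → Eqn S A X

/-- `b : X → C` is a solution of `E` in the act `C`, where `ι : A → C` interprets constants. -/
def IsSolution (S : Type u) [Monoid S] {A : Type v} {X : Type w} {C : Type*}
    [RAct S C] (ι : A → C) (E : Set (Eqn S A X)) (b : X → C) : Prop :=
  (∀ x s y t, Eqn.vv x s y t ∈ E → b x ⊳ s = b y ⊳ t) ∧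
  (∀ x s a, Eqn.vc x s a ∈ E → b x ⊳ s = ι a)

/-- A set of equations over `A` is consistent if it has a solution in some act containing `A`. -/
def Consistent (S : Type u) [Monoid S] {A : Type v} {X : Type w} [RAct S A]
    (E : Set (Eqn S A X)) : Prop :=
  ∃ (B : Type (max u v w)) (_ : RAct S B) (ι : A → B),
    Function.Injective ι ∧ IsRActHom S ι ∧ ∃ b : X → B, IsSolution S ι E b

/-- `A` is `n`-absolutely pure: every finite consistent system of equations over `A`
in at most `n` variables has a solution in `A`. -/
def NPure (S : Type u) [Monoid S] (A : Type v) [RAct S A] (n : ℕ) : Prop :=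
  ∀ E : Set (Eqn S A (Fin n)), E.Finite → Consistent S E →
    ∃ c : Fin n → A, IsSolution S id E c

/-- Almost pure: 1-absolutely pure. -/
def AlmostPure (S : Type u) [Monoid S] (A : Type v) [RAct S A] : Prop :=
  NPure S A 1

/-- Absolutely pure: `n`-absolutely pure for every `n`. -/
def AbsolutelyPure (S : Type u) [Monoid S] (A : Type v) [RAct S A] : Prop :=
  ∀ n : ℕ, NPure S A n

/-- The pairs `H(Σ)` in the free act coming from constant-free equations of `E`. -/
def Hcf (S : Type u) [Monoid S] {A : Type v} {X : Type w}
    (E : Set (Eqn S A X)) : Set ((X × S) × (X × S)) :=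
  {p | ∃ x u y v, Eqn.vv x u y v ∈ E ∧ p = ((x, u), (y, v))}

/-- The pairs `H(Σ) ∪ K(Σ)` on the disjoint union `A ⊔ F_S(X)`. -/
def HK (S : Type u) [Monoid S] {A : Type v} {X : Type w}
    (E : Set (Eqn S A X)) : Set ((A ⊕ X × S) × (A ⊕ X × S)) :=
  {p | (∃ x u y v, Eqn.vv x u y v ∈ E ∧ p = (Sum.inr (x, u), Sum.inr (y, v))) ∨
       (∃ x s a, Eqn.vc x s a ∈ E ∧ p = (Sum.inr (x, s), Sum.inl a))}

/-- Quotient of an act by a generated congruence. -/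
instance quotAct (S : Type u) [Monoid S] {A : Type v} [RAct S A] (H : Set (A × A)) :
    RAct S (Quot (congGen S H)) where
  act q s := Quot.map (fun a => a ⊳ s) (fun _a _b h => (isActCongr_congGen S H).act s h) q
  act_one := by
    rintro ⟨a⟩
    show Quot.mk _ (a ⊳ (1 : S)) = Quot.mk _ a
    rw [RAct.act_one]
  act_mul := by
    rintro ⟨a⟩ s t
    show Quot.mk _ (a ⊳ (s * t)) = Quot.mk _ (a ⊳ s ⊳ t)
    rw [RAct.act_mul]

/-- The canonical extension `A(Σ) = (A ⊔ F_S(X)) / κ_Σ`. -/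
abbrev ActExt (S : Type u) [Monoid S] {A : Type v} {X : Type w} [RAct S A]
    (E : Set (Eqn S A X)) : Type (max u v w) :=
  Quot (congGen S (HK S E))

/-- The natural map `ν_Σ : A → A(Σ)`. -/
def extOfBase (S : Type u) [Monoid S] {A : Type v} {X : Type w} [RAct S A]
    (E : Set (Eqn S A X)) (a : A) : ActExt S E :=
  Quot.mk _ (Sum.inl a)

/-- A finitely generated `S`-act. -/
def IsFG (S : Type u) [Monoid S] (A : Type v) [RAct S A] : Prop :=
  ∃ T : Finset A, ∀ a : A, ∃ t ∈ T, ∃ s : S, a = t ⊳ s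

/-- A monogenic (cyclic) `S`-act. -/
def Monogenic (S : Type u) [Monoid S] (C : Type v) [RAct S C] : Prop :=
  ∃ c : C, ∀ y : C, ∃ s : S, y = c ⊳ s

/-- `A` embeds into `C` as an `S`-act. -/
def ActEmbeds (S : Type u) [Monoid S] (A : Type v) (C : Type w) [RAct S A] [RAct S C] : Prop :=
  ∃ ι : A → C, IsRActHom S ι ∧ Function.Injective ι

/-- A finitely presented `S`-act: isomorphic to `F_S(X)/ρ` with `X` finite and
`ρ` a finitely generated congruence. -/
def IsFP (S : Type u) [Monoid S] (A : Type v) [RAct S A] : Prop :=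
  ∃ (n : ℕ) (H : Set ((Fin n × S) × (Fin n × S))), H.Finite ∧
    ∃ φ : Fin n × S → A, IsRActHom S φ ∧ Function.Surjective φ ∧
      ∀ p q : Fin n × S, φ p = φ q ↔ congGen S H p q

/-- A right coherent monoid. -/
def RightCoherent (S : Type u) [Monoid S] : Prop :=
  ∀ (A B : Type u) (_ : RAct S A) (_ : RAct S B) (ι : B → A),
    IsRActHom S ι → Function.Injective ι → IsFP S A → IsFG S B → IsFP S B

/-- The fem-property: every finitely generated `S`-act embeds into a monogenic act. -/
def FemProperty (S : Type u) [Monoid S] : Prop :=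
  ∀ (A : Type u) (_ : RAct S A), IsFG S A → ∃ (C : Type u) (_ : RAct S C),
    Monogenic S C ∧ ActEmbeds S A C

/-- A subact of an `S`-act. -/
structure Subact (S : Type u) [Monoid S] (B : Type v) [RAct S B] where
  carrier : Set B
  closed : ∀ b ∈ carrier, ∀ s : S, b ⊳ s ∈ carrier

instance subAct (S : Type u) [Monoid S] {B : Type v} [RAct S B] (T : Subact S B) :
    RAct S T.carrier where
  act a s := ⟨a.1 ⊳ s, T.closed a.1 a.2 s⟩
  act_one a := Subtype.ext (RAct.act_one a.1)
  act_mul a s t := Subtype.ext (RAct.act_mul a.1 s t)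


def BuiltFrom (S : Type u) [Monoid S] {A B : Type v} [RAct S A] [RAct S B]
    (ι : A → B) (P : ℕ → Prop) : Prop :=
  IsRActHom S ι ∧ Function.Injective ι ∧
  ∃ (ξ : Ordinal.{v}) (C : Ordinal.{v} → Subact S B),
    (C 0).carrier = Set.range ι ∧
    (∀ i j : Ordinal.{v}, i ≤ j → (C i).carrier ⊆ (C j).carrier) ∧
    (C ξ).carrier = Set.univ ∧
    (∀ ζ : Ordinal.{v}, ζ ≤ ξ → Order.IsSuccLimit ζ → (C ζ).carrier = ⋃ i ∈ Set.Iio ζ, (C i).carrier) ∧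
    (∀ i : Ordinal.{v}, i < ξ → ∃ m : ℕ, P m ∧
      (∃ E : Set (Eqn S (↥(C i).carrier) (Fin m)), Consistent S E ∧
        (∃ e : ActExt S E → B, IsRActHom S e ∧ Function.Injective e ∧
          Set.range e = (C (i + 1)).carrier ∧
          (∀ d : ↥(C i).carrier, e (extOfBase S E d) = d.1))))


/-- The right regular `S`-act: `S` acting on itself by multiplication. -/
instance regAct (S : Type u) [Monoid S] : RAct S S where
  act a s := a * s
  act_one := mul_one
  act_mul a s t := (mul_assoc a s t).symm

/-! ### Auxiliary material for `fem_tfae` -/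

section FemAux

open Sum

variable {S : Type u} [Monoid S] {A : Type u} [RAct S A]

attribute [local instance] Classical.propDecidable

/-- Normalisation map used to show injectivity of the gluing construction. -/
noncomputable def gq (s t : S) (a b : A) (w : S) : A ⊕ S :=
  if h : ∃ u, w = s * u then inl (a ⊳ h.choose)
  else if h : ∃ u, w = t * u then inl (b ⊳ h.choose)
  else inr w

lemma gq_s {s : S} (t : S) {a : A} (b : A)
    (hs : ∀ u v : S, s * u = s * v → u = v) (u : S) :
    gq s t a b (s * u) = inl (a ⊳ u) := by
  have h : ∃ v, s * u = s * v := ⟨u, rfl⟩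
  rw [gq, dif_pos h, ← hs u h.choose h.choose_spec]

lemma gq_t {s t : S} {a b : A}
    (ht : ∀ u v : S, t * u = t * v → u = v)
    (hst : ∀ u v : S, s * u ≠ t * v) (u : S) :
    gq s t a b (t * u) = inl (b ⊳ u) := by
  have h1 : ¬ ∃ v, t * u = s * v := by
    rintro ⟨v, hv⟩; exact hst v u hv.symm
  have h : ∃ v, t * u = t * v := ⟨u, rfl⟩
  rw [gq, dif_neg h1, dif_pos h, ← ht u h.choose h.choose_spec]

lemma gq_cases (s t : S) (a b : A) (w : S) :
    (∃ u, w = s * u) ∨ (∃ u, w = t * u) ∨ gq s t a b w = inr w := by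
  by_cases h1 : ∃ u, w = s * u
  · exact Or.inl h1
  by_cases h2 : ∃ u, w = t * u
  · exact Or.inr (Or.inl h2)
  · exact Or.inr (Or.inr (by rw [gq, dif_neg h1, dif_neg h2]))

/-- The kernel of `Sum.elim inl (gq s t a b)` is act-compatible. -/
lemma gq_act_compat {s t : S} {a b : A}
    (hs : ∀ u v : S, s * u = s * v → u = v)
    (ht : ∀ u v : S, t * u = t * v → u = v)
    (hst : ∀ u v : S, s * u ≠ t * v) :
    ∀ (z w : A ⊕ S) (r : S),
      Sum.elim inl (gq s t a b) z = Sum.elim inl (gq s t a b) w →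
      Sum.elim inl (gq s t a b) (z ⊳ r) = Sum.elim inl (gq s t a b) (w ⊳ r) := by
  have mix : ∀ (x : A) (w : S) (r : S),
      Sum.elim inl (gq s t a b) (inl x) = Sum.elim inl (gq s t a b) (inr w) →
      Sum.elim inl (gq s t a b) ((inl x : A ⊕ S) ⊳ r) =
        Sum.elim inl (gq s t a b) ((inr w : A ⊕ S) ⊳ r) := by
    intro x w r h
    rcases gq_cases s t a b w with ⟨u, rfl⟩ | ⟨u, rfl⟩ | hq
    · rw [Sum.elim_inl, Sum.elim_inr, gq_s t b hs u] at h
      have hx : x = a ⊳ u := by injection h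
      show inl (x ⊳ r) = gq s t a b (s * u * r)
      rw [mul_assoc, gq_s t b hs (u * r), hx, ← RAct.act_mul]
    · rw [Sum.elim_inl, Sum.elim_inr, gq_t ht hst u] at h
      have hx : x = b ⊳ u := by injection h
      show inl (x ⊳ r) = gq s t a b (t * u * r)
      rw [mul_assoc, gq_t ht hst (u * r), hx, ← RAct.act_mul]
    · rw [Sum.elim_inl, Sum.elim_inr, hq] at h
      exact absurd h (by simp)
  rintro (x | wz) (y | ww) r h
  · rw [Sum.elim_inl, Sum.elim_inl] at h
    have : x = y := by injection h
    subst this; rfl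
  · exact mix x ww r h
  · exact (mix y wz r h.symm).symm
  · rcases gq_cases s t a b wz with ⟨u, rfl⟩ | ⟨u, rfl⟩ | hq1 <;>
      rcases gq_cases s t a b ww with ⟨v, rfl⟩ | ⟨v, rfl⟩ | hq2
    · rw [Sum.elim_inr, Sum.elim_inr, gq_s t b hs u, gq_s t b hs v] at h
      have hab : a ⊳ u = a ⊳ v := by injection h
      show gq s t a b (s * u * r) = gq s t a b (s * v * r)
      rw [mul_assoc, mul_assoc, gq_s t b hs (u * r), gq_s t b hs (v * r),
        RAct.act_mul, RAct.act_mul, hab]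
    · rw [Sum.elim_inr, Sum.elim_inr, gq_s t b hs u, gq_t ht hst v] at h
      have hab : a ⊳ u = b ⊳ v := by injection h
      show gq s t a b (s * u * r) = gq s t a b (t * v * r)
      rw [mul_assoc, mul_assoc, gq_s t b hs (u * r), gq_t ht hst (v * r),
        RAct.act_mul, RAct.act_mul, hab]
    · rw [Sum.elim_inr, Sum.elim_inr, gq_s t b hs u, hq2] at h
      exact absurd h (by simp)
    · rw [Sum.elim_inr, Sum.elim_inr, gq_t ht hst u, gq_s t b hs v] at h
      have hab : b ⊳ u = a ⊳ v := by injection h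
      show gq s t a b (t * u * r) = gq s t a b (s * v * r)
      rw [mul_assoc, mul_assoc, gq_t ht hst (u * r), gq_s t b hs (v * r),
        RAct.act_mul, RAct.act_mul, hab]
    · rw [Sum.elim_inr, Sum.elim_inr, gq_t ht hst u, gq_t ht hst v] at h
      have hab : b ⊳ u = b ⊳ v := by injection h
      show gq s t a b (t * u * r) = gq s t a b (t * v * r)
      rw [mul_assoc, mul_assoc, gq_t ht hst (u * r), gq_t ht hst (v * r),
        RAct.act_mul, RAct.act_mul, hab]
    · rw [Sum.elim_inr, Sum.elim_inr, gq_t ht hst u, hq2] at h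
      exact absurd h (by simp)
    · rw [Sum.elim_inr, Sum.elim_inr, hq1, gq_s t b hs v] at h
      exact absurd h (by simp)
    · rw [Sum.elim_inr, Sum.elim_inr, hq1, gq_t ht hst v] at h
      exact absurd h (by simp)
    · rw [Sum.elim_inr, Sum.elim_inr, hq1, hq2] at h
      have : wz = ww := by injection h
      subst this; rfl

/-- The gluing construction: identify two generators `a`, `b` of `A` with the
images of `s`, `t` in a fresh copy of `S`. -/
lemma glue_main (s t : S) (a b : A)
    (hs : ∀ u v : S, s * u = s * v → u = v)
    (ht : ∀ u v : S, t * u = t * v → u = v)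
    (hst : ∀ u v : S, s * u ≠ t * v) :
    ∃ (B : Type u) (_ : RAct S B) (j : A → B) (e : S → B),
      IsRActHom S j ∧ Function.Injective j ∧
      (∀ w : S, e w = e 1 ⊳ w) ∧
      (∀ u : S, j (a ⊳ u) = e (s * u)) ∧
      (∀ u : S, j (b ⊳ u) = e (t * u)) ∧
      (∀ y : _, (∃ x, y = j x) ∨ (∃ w, y = e w)) := by
  classical
  set H : Set ((A ⊕ S) × (A ⊕ S)) :=
    {((inl a : A ⊕ S), (inr s : A ⊕ S)), ((inl b : A ⊕ S), (inr t : A ⊕ S))} with hH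
  refine ⟨Quot (congGen S H), inferInstance,
    fun x => Quot.mk _ (inl x), fun w => Quot.mk _ (inr w), ?_, ?_, ?_, ?_, ?_, ?_⟩
  · intro x r; rfl
  · -- injectivity via the kernel congruence
    intro x y hxy
    have hker : IsActCongr S
        (fun z w : A ⊕ S => Sum.elim inl (gq s t a b) z = Sum.elim inl (gq s t a b) w) :=
      { refl := fun _ => rfl
        symm := Eq.symm
        trans := Eq.trans
        act := fun {z w} r h => gq_act_compat hs ht hst z w r h }
    have hmem : ∀ p ∈ H, Sum.elim inl (gq s t a b) p.1 = Sum.elim inl (gq s t a b) p.2 := by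
      rintro p hp
      simp only [hH, Set.mem_insert_iff, Set.mem_singleton_iff] at hp
      rcases hp with hp | hp <;> subst hp
      · show inl a = gq s t a b s
        have h1 := gq_s (a := a) t b hs (1 : S)
        rw [mul_one, RAct.act_one] at h1
        exact h1.symm
      · show inl b = gq s t a b t
        have h1 := gq_t (a := a) (b := b) ht hst (1 : S)
        rw [mul_one, RAct.act_one] at h1
        exact h1.symm
    have heqv : Equivalence (congGen S H) :=
      ⟨(isActCongr_congGen S H).refl, fun h => (isActCongr_congGen S H).symm h,
        fun h1 h2 => (isActCongr_congGen S H).trans h1 h2⟩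
    have hrel : congGen S H (inl x) (inl y) := heqv.eqvGen_iff.1 (Quot.eqvGen_exact hxy)
    have := hrel _ hker hmem
    rw [Sum.elim_inl, Sum.elim_inl] at this
    injection this
  · intro w
    show Quot.mk _ (inr w) = Quot.mk _ (inr ((1 : S) * w))
    rw [one_mul]
  · intro u
    apply Quot.sound
    intro r hr hmem
    exact hr.act u (hmem _ (Set.mem_insert _ _))
  · intro u
    apply Quot.sound
    intro r hr hmem
    exact hr.act u (hmem _ (Set.mem_insert_of_mem _ rfl))
  · intro y
    induction y using Quot.ind with
    | _ z =>
      rcases z with x | w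
      · exact Or.inl ⟨x, rfl⟩
      · exact Or.inr ⟨w, rfl⟩

/-- Every act generated by finitely many elements embeds into a monogenic act,
given left cancellable `s`, `t` with disjoint principal right ideals. -/
lemma fem_aux (S : Type u) [Monoid S] (s t : S)
    (hs : ∀ u v : S, s * u = s * v → u = v)
    (ht : ∀ u v : S, t * u = t * v → u = v)
    (hst : ∀ u v : S, s * u ≠ t * v) :
    ∀ (n : ℕ) (A : Type u) (_ : RAct S A) (g : Fin n → A),
      (∀ x : A, ∃ (i : Fin n) (u : S), x = g i ⊳ u) →
      ∃ (C : Type u) (_ : RAct S C), Monogenic S C ∧ ActEmbeds S A C := by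
  intro n
  induction n with
  | zero =>
    intro A instA g hg
    have hemp : A → False := fun x => by
      obtain ⟨i, _, _⟩ := hg x; exact i.elim0
    exact ⟨S, regAct S, ⟨1, fun y => ⟨y, (one_mul y).symm⟩⟩,
      fun x => (hemp x).elim, fun x => (hemp x).elim, fun x => (hemp x).elim⟩
  | succ n ih =>
    intro A instA g hg
    cases n with
    | zero =>
      refine ⟨A, instA, ⟨g 0, fun x => ?_⟩, id, fun _ _ => rfl, fun _ _ h => h⟩
      obtain ⟨i, u, hx⟩ := hg x
      exact ⟨u, by rwa [Fin.eq_zero i] at hx⟩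
    | succ m =>
      classical
      obtain ⟨B, instB, j, e, jhom, jinj, he1, hjs, hjt, hcov⟩ :=
        glue_main s t (g 0) (g 1) hs ht hst
      set g' : Fin (m + 1) → B := fun i => if i = 0 then e 1 else j (g i.succ) with hg'
      have hgen : ∀ y : B, ∃ (i : Fin (m + 1)) (u : S), y = g' i ⊳ u := by
        intro y
        rcases hcov y with ⟨x, rfl⟩ | ⟨w, rfl⟩
        · obtain ⟨i, u, hx⟩ := hg x
          by_cases hi0 : i = 0
          · refine ⟨0, s * u, ?_⟩
            have hgz : g' 0 = e 1 := by simp [hg']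
            rw [hgz, hx, hi0, hjs u, he1 (s * u)]
          · by_cases hi1 : i = 1
            · refine ⟨0, t * u, ?_⟩
              have hgz : g' 0 = e 1 := by simp [hg']
              rw [hgz, hx, hi1, hjt u, he1 (t * u)]
            · have h0 : i.val ≠ 0 := fun h => hi0 (Fin.ext h)
              have h1 : i.val ≠ 1 := fun h => hi1 (Fin.ext h)
              have hlt : i.val - 1 < m + 1 := by omega
              refine ⟨⟨i.val - 1, hlt⟩, u, ?_⟩
              have hne : (⟨i.val - 1, hlt⟩ : Fin (m + 1)) ≠ 0 := by
                intro h
                have := congrArg Fin.val h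
                simp at this; omega
              have hsucc : (⟨i.val - 1, hlt⟩ : Fin (m + 1)).succ = i := by
                apply Fin.ext
                simp [Fin.val_succ]; omega
              have hgi : g' ⟨i.val - 1, hlt⟩ = j (g i) := by
                simp only [hg', if_neg hne, hsucc]
              rw [hgi, hx, jhom]
        · refine ⟨0, w, ?_⟩
          have hgz : g' 0 = e 1 := by simp [hg']
          rw [hgz]; exact he1 w
      obtain ⟨C, instC, hmono, ι, ιhom, ιinj⟩ := ih B instB g' hgen
      refine ⟨C, instC, hmono, ι ∘ j, ?_, ιinj.comp jinj⟩
      intro x r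
      show ι (j (x ⊳ r)) = ι (j x) ⊳ r
      rw [jhom, ιhom]

end FemAux

/-- Characterisation of the fem-property. -/
theorem fem_tfae (S : Type u) [Monoid S] :
    [ FemProperty S,
      ∀ (A : Type u) (_ : RAct S A),
        (∃ a b : A, ∀ x : A, (∃ s : S, x = a ⊳ s) ∨ (∃ s : S, x = b ⊳ s)) →
        ∃ (C : Type u) (_ : RAct S C), Monogenic S C ∧ ActEmbeds S A C,
      ∃ (C : Type u) (_ : RAct S C), Monogenic S C ∧ ActEmbeds S (Fin 2 × S) C,
      ActEmbeds S (Fin 2 × S) S,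
      ∃ s t : S, (∀ u v : S, s * u = s * v → u = v) ∧
        (∀ u v : S, t * u = t * v → u = v) ∧ ∀ u v : S, s * u ≠ t * v ].TFAE := by
  tfae_have 1 → 2 := by
    intro h1 A instA hab
    obtain ⟨a, b, hab⟩ := hab
    classical
    apply h1 A instA
    refine ⟨{a, b}, ?_⟩
    intro x
    rcases hab x with ⟨u, hu⟩ | ⟨u, hu⟩
    · exact ⟨a, by simp, u, hu⟩
    · exact ⟨b, by simp, u, hu⟩
  tfae_have 2 → 3 := by
    intro h2
    apply h2 (Fin 2 × S) (freeAct S (Fin 2))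
    refine ⟨((0 : Fin 2), 1), ((1 : Fin 2), 1), ?_⟩
    rintro ⟨i, w⟩
    have hi : i = 0 ∨ i = 1 := by
      rcases i with ⟨iv, hiv⟩
      interval_cases iv
      · exact Or.inl (Fin.ext rfl)
      · exact Or.inr (Fin.ext rfl)
    rcases hi with rfl | rfl
    · exact Or.inl ⟨w, by show ((0 : Fin 2), w) = ((0 : Fin 2), 1 * w); rw [one_mul]⟩
    · exact Or.inr ⟨w, by show ((1 : Fin 2), w) = ((1 : Fin 2), 1 * w); rw [one_mul]⟩
  tfae_have 3 → 5 := by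
    rintro ⟨C, instC, ⟨c, hc⟩, ι, ιhom, ιinj⟩
    obtain ⟨s, hsx⟩ := hc (ι ((0 : Fin 2), 1))
    obtain ⟨t, htx⟩ := hc (ι ((1 : Fin 2), 1))
    have key0 : ∀ u : S, ι ((0 : Fin 2), u) = c ⊳ (s * u) := by
      intro u
      have h2 := ιhom ((0 : Fin 2), (1 : S)) u
      rw [hsx, ← RAct.act_mul] at h2
      conv_lhs => rw [← one_mul u]
      exact h2
    have key1 : ∀ u : S, ι ((1 : Fin 2), u) = c ⊳ (t * u) := by
      intro u
      have h2 := ιhom ((1 : Fin 2), (1 : S)) u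
      rw [htx, ← RAct.act_mul] at h2
      conv_lhs => rw [← one_mul u]
      exact h2
    refine ⟨s, t, ?_, ?_, ?_⟩
    · intro u v h
      have h2 := ιinj (a₁ := ((0 : Fin 2), u)) (a₂ := ((0 : Fin 2), v))
        (by rw [key0, key0, h])
      exact congrArg Prod.snd h2
    · intro u v h
      have h2 := ιinj (a₁ := ((1 : Fin 2), u)) (a₂ := ((1 : Fin 2), v))
        (by rw [key1, key1, h])
      exact congrArg Prod.snd h2
    · intro u v h
      have h2 := ιinj (a₁ := ((0 : Fin 2), u)) (a₂ := ((1 : Fin 2), v))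
        (by rw [key0, key1, h])
      have h3 := congrArg Prod.fst h2
      simp at h3
  tfae_have 5 → 4 := by
    rintro ⟨s, t, hs, ht, hst⟩
    refine ⟨fun p => if p.1 = 0 then s * p.2 else t * p.2, ?_, ?_⟩
    · rintro ⟨i, u⟩ r
      show (if i = 0 then s * (u * r) else t * (u * r)) =
        (if i = 0 then s * u else t * u) * r
      split_ifs <;> rw [mul_assoc]
    · rintro ⟨i, u⟩ ⟨k, v⟩ h
      have hi : i = 0 ∨ i = 1 := by
        rcases i with ⟨iv, hiv⟩
        interval_cases iv
        · exact Or.inl (Fin.ext rfl)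
        · exact Or.inr (Fin.ext rfl)
      have hk : k = 0 ∨ k = 1 := by
        rcases k with ⟨kv, hkv⟩
        interval_cases kv
        · exact Or.inl (Fin.ext rfl)
        · exact Or.inr (Fin.ext rfl)
      rcases hi with rfl | rfl <;> rcases hk with rfl | rfl <;> simp at h
      · exact congrArg (Prod.mk (0 : Fin 2)) (hs u v h)
      · exact (hst u v h).elim
      · exact (hst v u h.symm).elim
      · exact congrArg (Prod.mk (1 : Fin 2)) (ht u v h)
  tfae_have 4 → 3 := by
    intro h4
    exact ⟨S, regAct S, ⟨1, fun y => ⟨y, (one_mul y).symm⟩⟩, h4⟩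
  tfae_have 5 → 1 := by
    rintro ⟨s, t, hs, ht, hst⟩ A instA ⟨T, hT⟩
    classical
    apply fem_aux S s t hs ht hst T.toList.length A instA (fun i => T.toList.get i)
    intro x
    obtain ⟨tt, htt, u, hx⟩ := hT x
    obtain ⟨i, hi⟩ := List.mem_iff_get.1 ((Finset.mem_toList).2 htt)
    exact ⟨i, u, by rw [hi]; exact hx⟩
  tfae_finish
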